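/- Let F : S⁺_d → ℝ be C¹ with symmetric gradient ∇F, and suppose Σ : [0,∞) → S⁺_d and X : [0,∞) → ℝ^{d×d} satisfy X'(t) = −2 X(t) ∇F(X(t)ᵀ X(t)) with X(0)ᵀ X(0) = Σ(0), and Σ'(t) = −2(∇F(Σ(t)) Σ(t) + Σ(t) ∇F(Σ(t))), with the latter ODE having unique solutions. Then X(t)ᵀ X(t) = Σ(t) for all t ≥ 0. -/

import Mathlib

open Matrix

/-- lifting the Bures–Wasserstein gradient flow Σ' = −2(∇F(Σ)Σ + Σ∇F(Σ))
to the Euclidean flow X' = −2X∇F(XᵀX): if the covariance ODE has unique solutions,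
then XᵀX = Σ for all times. -/
theorem stmt17 (d : ℕ)
    (gF : Matrix (Fin d) (Fin d) ℝ → Matrix (Fin d) (Fin d) ℝ)
    (hsym : ∀ A, A.PosSemidef → (gF A).IsHermitian)
    (S : ℝ → Matrix (Fin d) (Fin d) ℝ) (X : ℝ → Matrix (Fin d) (Fin d) ℝ)
    (hSpsd : ∀ t ≥ (0 : ℝ), (S t).PosSemidef)
    (hX : ∀ t ≥ (0 : ℝ), ∀ i j, HasDerivAt (fun s => X s i j)
      ((-(2 : ℝ) • (X t * gF ((X t)ᵀ * X t))) i j) t)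
    (hS : ∀ t ≥ (0 : ℝ), ∀ i j, HasDerivAt (fun s => S s i j)
      ((-(2 : ℝ) • (gF (S t) * S t + S t * gF (S t))) i j) t)
    (hinit : (X 0)ᵀ * X 0 = S 0)
    (huniq : ∀ S₁ S₂ : ℝ → Matrix (Fin d) (Fin d) ℝ,
      (∀ t ≥ (0 : ℝ), ∀ i j, HasDerivAt (fun s => S₁ s i j)
        ((-(2 : ℝ) • (gF (S₁ t) * S₁ t + S₁ t * gF (S₁ t))) i j) t) →
      (∀ t ≥ (0 : ℝ), ∀ i j, HasDerivAt (fun s => S₂ s i j)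
        ((-(2 : ℝ) • (gF (S₂ t) * S₂ t + S₂ t * gF (S₂ t))) i j) t) →
      S₁ 0 = S₂ 0 → ∀ t ≥ (0 : ℝ), S₁ t = S₂ t) :
    ∀ t ≥ (0 : ℝ), (X t)ᵀ * X t = S t := by
  refine huniq (fun s => (X s)ᵀ * X s) S ?_ hS hinit
  intro t ht i j
  set T : Matrix (Fin d) (Fin d) ℝ := (X t)ᵀ * X t with hT
  have hpsd : T.PosSemidef := Matrix.posSemidef_conjTranspose_mul_self (X t)
  have hG : (gF T)ᵀ = gF T := by
    have h := (hsym T hpsd).eq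
    rwa [Matrix.conjTranspose_eq_transpose_of_trivial] at h
  have key : ((X t)ᵀ * (-(2:ℝ) • (X t * gF T)) + (-(2:ℝ) • (X t * gF T))ᵀ * X t)
      = (-(2:ℝ) • (gF T * T + T * gF T)) := by
    rw [Matrix.transpose_smul, Matrix.transpose_mul, hG, Matrix.mul_smul, Matrix.smul_mul,
      ← smul_add, ← Matrix.mul_assoc, Matrix.mul_assoc (gF T), ← hT, add_comm]
  rw [← key]
  have hd : ∀ k : Fin d, HasDerivAt (fun s => X s k i * X s k j)
      ((-(2:ℝ) • (X t * gF T)) k i * X t k j + X t k i * (-(2:ℝ) • (X t * gF T)) k j) t :=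
    fun k => (hX t ht k i).mul (hX t ht k j)
  have hsum : HasDerivAt (fun s => ∑ k, X s k i * X s k j)
      (∑ k, ((-(2:ℝ) • (X t * gF T)) k i * X t k j + X t k i * (-(2:ℝ) • (X t * gF T)) k j)) t :=
    HasDerivAt.fun_sum (fun k _ => hd k)
  have heq : (fun s => ((X s)ᵀ * X s) i j) = fun s => ∑ k, X s k i * X s k j := by
    funext s; simp [Matrix.mul_apply, Matrix.transpose_apply]
  have expand : ((X t)ᵀ * (-(2:ℝ) • (X t * gF T)) + (-(2:ℝ) • (X t * gF T))ᵀ * X t) i j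
      = ∑ k, ((-(2:ℝ) • (X t * gF T)) k i * X t k j + X t k i * (-(2:ℝ) • (X t * gF T)) k j) := by
    simp only [Matrix.add_apply, Matrix.mul_apply, Matrix.transpose_apply, Finset.sum_add_distrib]
    rw [add_comm]
  rw [heq, expand]
  exact hsum
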